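/- Let G be a finite simple graph with vertex clique-partition π = {W_1,…,W_d}, let G^π be the clique-whiskered graph with added vertex set W, and order the maximal independent vertex sets of G^π by F_1 ≤ F_2 ⇔ F_1 \ W ⊆ F_2 \ W. Let F be a maximal element of this poset and set r = |F \ W|. Then there are exactly r! maximal chains from W to F in this poset; that is, exactly r! sequences F_0 = W, F_1, …, F_r = F of maximal independent sets of G^π such that for each k, F_k \ W ⊆ F_{k+1} \ W and |（F_{k+1} \ W) \ (F_k \ W)| = 1. -/
import Mathlib


namespace Paper

variable {V : Type*}

/-- `S` is an independent vertex set of the graph `H` (equivalently, of any induced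
subgraph of `H` containing `S`): its vertices are pairwise non-adjacent. -/
def IndepOn (H : SimpleGraph V) (S : Set V) : Prop :=
  ∀ x ∈ S, ∀ y ∈ S, ¬ H.Adj x y

/-- `S` is a maximal independent vertex set of the graph `H`. -/
def MaxIndep (H : SimpleGraph V) (S : Set V) : Prop :=
  IndepOn H S ∧ ∀ T : Set V, IndepOn H T → S ⊆ T → T = S

/-- The data exhibiting the graph `H` (on its full vertex type) as the
clique-whiskered graph `G^π` over the base graph `G` (the induced subgraph of `H` on
`Vg`), built from a vertex clique-partition `π = {W_1, …, W_d}` of `G` by adding `d`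
new vertices `s_1', …, s_d'`, where `s_i'` is adjacent exactly to the vertices of
`W i`.  The set of added vertices is `W = Set.range sV`. -/
structure CliqueWhiskered (H : SimpleGraph V) (d : ℕ) where
  /-- the vertex set of the base graph `G`; the edges of `G` are the edges of `H`
  between vertices of `Vg`, i.e. `G` is the induced subgraph of `H` on `Vg`. -/
  Vg : Set V
  /-- the vertex clique-partition `π = {W_1, …, W_d}` of `G` -/
  W : Fin d → Set V
  /-- the added whisker vertices `s_1', …, s_d'` -/
  sV : Fin d → V
  W_ne : ∀ i, (W i).Nonempty
  W_sub : ∀ i, W i ⊆ Vg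
  W_disj : ∀ i j, i ≠ j → Disjoint (W i) (W j)
  W_cover : Vg ⊆ ⋃ i, W i
  W_clique : ∀ i, ∀ x ∈ W i, ∀ y ∈ W i, x ≠ y → H.Adj x y
  s_notin : ∀ i, sV i ∉ Vg
  s_inj : Function.Injective sV
  /-- the vertex set of `G^π` is `V(G)` together with the new vertices -/
  total : Set.univ = Vg ∪ Set.range sV
  /-- `s_i'` is adjacent exactly to the vertices of `W i` -/
  s_adj : ∀ i, ∀ w : V, H.Adj (sV i) w ↔ w ∈ W i

section Aux

variable {H : SimpleGraph V} {d : ℕ} (M : CliqueWhiskered H d)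

lemma diff_subset_Vg (S : Set V) : S \ Set.range M.sV ⊆ M.Vg := by
  intro x hx
  have hx' : x ∈ M.Vg ∪ Set.range M.sV := M.total ▸ Set.mem_univ x
  rcases hx' with h | h
  · exact h
  · exact absurd h hx.2

lemma indepOn_mono {S T : Set V} (h : IndepOn H T) (hST : S ⊆ T) : IndepOn H S :=
  fun x hx y hy => h x (hST hx) y (hST hy)

lemma maxIndep_subset_of_diff {S S' : Set V} (hS : MaxIndep H S) (hS' : MaxIndep H S')
    (h : S \ Set.range M.sV = S' \ Set.range M.sV) : S ⊆ S' := by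
  intro x hx
  by_cases hxr : x ∈ Set.range M.sV
  · obtain ⟨i, rfl⟩ := hxr
    by_cases hadj : ∃ y ∈ S', H.Adj (M.sV i) y
    · obtain ⟨y, hyS', hy⟩ := hadj
      have hyW : y ∈ M.W i := (M.s_adj i y).mp hy
      have hyVg : y ∈ M.Vg := M.W_sub i hyW
      have hyr : y ∉ Set.range M.sV := by
        rintro ⟨j, rfl⟩; exact M.s_notin j hyVg
      have hyS : y ∈ S := by
        have : y ∈ S' \ Set.range M.sV := ⟨hyS', hyr⟩
        rw [← h] at this; exact this.1
      exact absurd hy (hS.1 _ hx _ hyS)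
    · push_neg at hadj
      have hind : IndepOn H (insert (M.sV i) S') := by
        intro a ha b hb hab
        rcases ha with rfl | ha
        · rcases hb with rfl | hb
          · exact H.irrefl hab
          · exact hadj b hb hab
        · rcases hb with rfl | hb
          · exact hadj a ha hab.symm
          · exact hS'.1 a ha b hb hab
      have := hS'.2 _ hind (Set.subset_insert _ _)
      rw [← this]; exact Set.mem_insert _ _
  · have : x ∈ S \ Set.range M.sV := ⟨hx, hxr⟩
    rw [h] at this; exact this.1

lemma maxIndep_eq_of_diff_eq {S S' : Set V} (hS : MaxIndep H S) (hS' : MaxIndep H S')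
    (h : S \ Set.range M.sV = S' \ Set.range M.sV) : S = S' :=
  Set.Subset.antisymm (maxIndep_subset_of_diff M hS hS' h)
    (maxIndep_subset_of_diff M hS' hS h.symm)

/-- the canonical maximal independent set extending a base independent set -/
def extSet (A : Set V) : Set V :=
  A ∪ M.sV '' {i | ∀ a ∈ A, a ∉ M.W i}

lemma extSet_diff {A : Set V} (hA : A ⊆ M.Vg) :
    extSet M A \ Set.range M.sV = A := by
  ext x
  constructor
  · rintro ⟨hx, hxr⟩
    rcases hx with hx | ⟨i, _, rfl⟩
    · exact hx
    · exact absurd ⟨i, rfl⟩ hxr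
  · intro hx
    refine ⟨Or.inl hx, ?_⟩
    rintro ⟨i, rfl⟩
    exact M.s_notin i (hA hx)

lemma extSet_maxIndep {A : Set V} (hA : A ⊆ M.Vg) (hI : IndepOn H A) :
    MaxIndep H (extSet M A) := by
  constructor
  · rintro x hx y hy hadj
    rcases hx with hx | ⟨i, hi, rfl⟩
    · rcases hy with hy | ⟨j, hj, rfl⟩
      · exact hI x hx y hy hadj
      · exact hj x hx ((M.s_adj j x).mp hadj.symm)
    · rcases hy with hy | ⟨j, hj, rfl⟩
      · exact hi y hy ((M.s_adj i y).mp hadj)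
      · exact M.s_notin j (M.W_sub i ((M.s_adj i _).mp hadj))
  · intro T hT hsub
    refine Set.Subset.antisymm ?_ hsub
    intro x hx
    have hx' : x ∈ M.Vg ∪ Set.range M.sV := M.total ▸ Set.mem_univ x
    rcases hx' with hxV | ⟨i, rfl⟩
    · obtain ⟨_, ⟨i, rfl⟩, hxW⟩ := M.W_cover hxV
      by_cases hAi : ∃ a ∈ A, a ∈ M.W i
      · obtain ⟨a, haA, haW⟩ := hAi
        rcases eq_or_ne a x with rfl | hne
        · exact Or.inl haA
        · exact absurd (M.W_clique i a haW x hxW hne)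
            (hT a (hsub (Or.inl haA)) x hx)
      · push_neg at hAi
        have hsi : M.sV i ∈ extSet M A := Or.inr ⟨i, hAi, rfl⟩
        exact absurd ((M.s_adj i x).mpr hxW)
          (hT _ (hsub hsi) x hx)
    · by_cases hAi : ∃ a ∈ A, a ∈ M.W i
      · obtain ⟨a, haA, haW⟩ := hAi
        exact absurd ((M.s_adj i a).mpr haW)
          (hT _ hx a (hsub (Or.inl haA)))
      · push_neg at hAi
        exact Or.inr ⟨i, hAi, rfl⟩

lemma extSet_empty : extSet M (∅ : Set V) = Set.range M.sV := by
  simp [extSet]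

end Aux

section Count

lemma flag_mono {r : ℕ} {g : Fin (r + 1) → Set V}
    (h : ∀ k : Fin r, g k.castSucc ⊆ g k.succ) : Monotone g :=
  Fin.monotone_iff_le_succ.mpr h

lemma injSet_ncard [Fintype V] (A : Set V) (r : ℕ) (hr : A.ncard = r) :
    {f : Fin r → V | Function.Injective f ∧ Set.range f = A}.ncard = Nat.factorial r := by
  classical
  haveI : Fintype ↥A := Fintype.ofFinite ↥A
  have hcardA : Fintype.card ↥A = r := by
    rw [← hr, Set.ncard_eq_toFinset_card', Set.toFinset_card]
  set Θ : (Fin r ↪ ↥A) → (Fin r → V) := fun e j => (e j : V) with hΘ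
  have hΘinj : Function.Injective Θ := by
    intro e₁ e₂ he
    ext j
    exact congrFun he j
  have hrange : Set.range Θ = {f : Fin r → V | Function.Injective f ∧ Set.range f = A} := by
    ext f
    constructor
    · rintro ⟨e, rfl⟩
      have hfinj : Function.Injective (Θ e) :=
        Subtype.coe_injective.comp e.injective
      refine ⟨hfinj, ?_⟩
      have hsub : Set.range (Θ e) ⊆ A := by
        rintro _ ⟨j, rfl⟩; exact (e j).2
      refine Set.eq_of_subset_of_ncard_le hsub ?_ (Set.toFinite _)
      rw [hr]
      have : (Set.range (Θ e)).ncard = r := by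
        rw [← Nat.card_coe_set_eq, Nat.card_range_of_injective hfinj,
          Nat.card_eq_fintype_card, Fintype.card_fin]
      omega
    · rintro ⟨hfinj, hfr⟩
      refine ⟨⟨fun j => ⟨f j, hfr ▸ Set.mem_range_self j⟩, ?_⟩, ?_⟩
      · intro a b hab
        exact hfinj (congrArg Subtype.val hab)
      · rfl
  calc {f : Fin r → V | Function.Injective f ∧ Set.range f = A}.ncard
      = (Set.range Θ).ncard := by rw [hrange]
    _ = Nat.card (Fin r ↪ ↥A) := by
        rw [← Nat.card_coe_set_eq, Nat.card_range_of_injective hΘinj]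
    _ = Nat.factorial r := by
        rw [Nat.card_eq_fintype_card, Fintype.card_embedding_eq, hcardA,
          Fintype.card_fin, Nat.descFactorial_self]

lemma flag_ncard [Fintype V] (A : Set V) (r : ℕ) (hr : A.ncard = r) :
    {g : Fin (r + 1) → Set V | g 0 = ∅ ∧ g (Fin.last r) = A ∧
      ∀ k : Fin r, g k.castSucc ⊆ g k.succ ∧
        (g k.succ \ g k.castSucc).ncard = 1}.ncard = Nat.factorial r := by
  classical
  set inj : Set (Fin r → V) := {f : Fin r → V | Function.Injective f ∧ Set.range f = A}
    with hinj
  set Φ : (Fin r → V) → (Fin (r + 1) → Set V) :=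
    fun f k => f '' {j : Fin r | (j : ℕ) < (k : ℕ)} with hΦ
  have hidx0 : {j : Fin r | (j : ℕ) < ((0 : Fin (r+1)) : ℕ)} = ∅ := by
    ext j; simp
  have hidxlast : {j : Fin r | (j : ℕ) < ((Fin.last r : Fin (r+1)) : ℕ)} = Set.univ := by
    ext j; simpa using j.isLt
  have hidxcast : ∀ k : Fin r,
      {j : Fin r | (j : ℕ) < ((k.castSucc : Fin (r+1)) : ℕ)} = {j : Fin r | (j : ℕ) < (k:ℕ)} := by
    intro k; ext j; simp
  have hidxsucc : ∀ k : Fin r,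
      {j : Fin r | (j : ℕ) < ((k.succ : Fin (r+1)) : ℕ)} = {j : Fin r | (j : ℕ) < (k:ℕ)+1} := by
    intro k; ext j; simp
  have hidxdiff : ∀ k : Fin r,
      {j : Fin r | (j : ℕ) < (k:ℕ)+1} \ {j : Fin r | (j : ℕ) < (k:ℕ)} = {k} := by
    intro k
    ext j
    simp only [Set.mem_diff, Set.mem_setOf_eq, Set.mem_singleton_iff, Fin.ext_iff]
    omega
  have hstep : ∀ f : Fin r → V, Function.Injective f → ∀ k : Fin r,
      Φ f k.succ \ Φ f k.castSucc = {f k} := by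
    intro f hf k
    rw [hΦ]
    simp only
    rw [hidxcast, hidxsucc, ← Set.image_diff hf, hidxdiff, Set.image_singleton]
  have hbij : Set.BijOn Φ inj
      {g : Fin (r + 1) → Set V | g 0 = ∅ ∧ g (Fin.last r) = A ∧
        ∀ k : Fin r, g k.castSucc ⊆ g k.succ ∧
          (g k.succ \ g k.castSucc).ncard = 1} := by
    refine ⟨?_, ?_, ?_⟩
    · rintro f ⟨hfinj, hfr⟩
      refine ⟨?_, ?_, ?_⟩
      · show Φ f 0 = ∅
        rw [hΦ]; simp only; rw [hidx0, Set.image_empty]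
      · show Φ f (Fin.last r) = A
        rw [hΦ]; simp only; rw [hidxlast, Set.image_univ, hfr]
      · intro k
        constructor
        · apply Set.image_mono
          rw [hidxcast, hidxsucc]
          intro j hj
          simp only [Set.mem_setOf_eq] at hj ⊢
          omega
        · rw [hstep f hfinj k, Set.ncard_singleton]
    · rintro f ⟨hfinj, _⟩ f' ⟨hf'inj, _⟩ hff'
      funext k
      have h1 := hstep f hfinj k
      have h2 := hstep f' hf'inj k
      rw [hff'] at h1
      rw [h1] at h2
      exact Set.singleton_eq_singleton_iff.mp h2
    · rintro g ⟨hg0, hglast, hgstep⟩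
      have hx : ∀ k : Fin r, ∃ x, g k.succ \ g k.castSucc = {x} := by
        intro k
        exact Set.ncard_eq_one.mp (hgstep k).2
      choose x hx using hx
      have hgmono : Monotone g := flag_mono fun k => (hgstep k).1
      have hxin : ∀ k : Fin r, x k ∈ g k.succ ∧ x k ∉ g k.castSucc := by
        intro k
        have : x k ∈ g k.succ \ g k.castSucc := (hx k) ▸ rfl
        exact ⟨this.1, this.2⟩
      have hxlt : ∀ j k : Fin r, (j : ℕ) < (k : ℕ) → x j ≠ x k := by
        intro j k hjk heq
        have h1 : x j ∈ g k.castSucc := by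
          apply hgmono (show j.succ ≤ k.castSucc by
            rw [Fin.le_def]; simpa using hjk)
          exact (hxin j).1
        rw [heq] at h1
        exact (hxin k).2 h1
      have hxinj : Function.Injective x := by
        intro j k heq
        by_contra hne
        rcases lt_or_gt_of_ne (fun h : (j:ℕ) = (k:ℕ) => hne (Fin.ext h)) with h | h
        · exact hxlt j k h heq
        · exact hxlt k j h heq.symm
      have hunion : ∀ k : Fin r, g k.succ = g k.castSucc ∪ {x k} := by
        intro k
        rw [← hx k, Set.union_diff_cancel (hgstep k).1]
      have hΦeq : Φ x = g := by
        funext k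
        induction k using Fin.induction with
        | zero =>
          show Φ x 0 = g 0
          rw [hΦ]; simp only; rw [hidx0, Set.image_empty, hg0]
        | succ i ih =>
          show Φ x i.succ = g i.succ
          rw [hΦ] at ih ⊢
          simp only at ih ⊢
          rw [hidxsucc, hunion i, ← ih, hidxcast]
          have : {j : Fin r | (j : ℕ) < (i:ℕ)+1} =
              {j : Fin r | (j : ℕ) < (i:ℕ)} ∪ {i} := by
            ext j
            simp only [Set.mem_union, Set.mem_setOf_eq, Set.mem_singleton_iff, Fin.ext_iff]
            omega
          rw [this, Set.image_union, Set.image_singleton]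
      have hxrange : Set.range x = A := by
        have hsub : Set.range x ⊆ A := by
          rintro _ ⟨k, rfl⟩
          have : x k ∈ g (Fin.last r) := by
            apply hgmono (show k.succ ≤ Fin.last r from Fin.le_last _)
            exact (hxin k).1
          rwa [hglast] at this
        refine Set.eq_of_subset_of_ncard_le hsub ?_ (Set.toFinite _)
        rw [hr]
        have : (Set.range x).ncard = r := by
          rw [← Nat.card_coe_set_eq, Nat.card_range_of_injective hxinj,
            Nat.card_eq_fintype_card, Fintype.card_fin]
        omega
      exact ⟨x, ⟨hxinj, hxrange⟩, hΦeq⟩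
  rw [← hbij.image_eq, Set.ncard_image_of_injOn hbij.injOn]
  exact injSet_ncard A r hr

end Count

/-- **Theorem.** Let `F` be a maximal element of the poset of maximal independent
vertex sets of `G^π` (ordered by `F₁ ≤ F₂ ⇔ F₁ \ W ⊆ F₂ \ W`) and let `r = |F \ W|`.
Then there are exactly `r!` maximal chains from `W` to `F` in this poset, i.e. exactly
`r!` sequences `F_0 = W, F_1, …, F_r = F` of maximal independent sets of `G^π` such
that for each `k`, `F_k \ W ⊆ F_{k+1} \ W` and `|(F_{k+1} \ W) \ (F_k \ W)| = 1`. -/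
theorem cliqueWhiskered_maximal_chains_card [Fintype V]
    (H : SimpleGraph V) (d : ℕ) (M : CliqueWhiskered H d)
    (F : Set V) (hF : MaxIndep H F)
    (hFmax : ∀ F' : Set V, MaxIndep H F' →
      F \ Set.range M.sV ⊆ F' \ Set.range M.sV →
      F' \ Set.range M.sV = F \ Set.range M.sV)
    (r : ℕ) (hr : (F \ Set.range M.sV).ncard = r) :
    {c : Fin (r + 1) → Set V |
      c 0 = Set.range M.sV ∧ c (Fin.last r) = F ∧
      (∀ k, MaxIndep H (c k)) ∧
      (∀ k : Fin r,
        c k.castSucc \ Set.range M.sV ⊆ c k.succ \ Set.range M.sV ∧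
        ((c k.succ \ Set.range M.sV) \
          (c k.castSucc \ Set.range M.sV)).ncard = 1)}.ncard = Nat.factorial r := by
  classical
  set A : Set V := F \ Set.range M.sV with hA
  have hAVg : A ⊆ M.Vg := diff_subset_Vg M F
  have hAind : IndepOn H A := indepOn_mono hF.1 Set.diff_subset
  set Ψ : (Fin (r + 1) → Set V) → (Fin (r + 1) → Set V) :=
    fun c k => c k \ Set.range M.sV with hΨ
  have hbij : Set.BijOn Ψ
      {c : Fin (r + 1) → Set V |
        c 0 = Set.range M.sV ∧ c (Fin.last r) = F ∧
        (∀ k, MaxIndep H (c k)) ∧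
        (∀ k : Fin r,
          c k.castSucc \ Set.range M.sV ⊆ c k.succ \ Set.range M.sV ∧
          ((c k.succ \ Set.range M.sV) \
            (c k.castSucc \ Set.range M.sV)).ncard = 1)}
      {g : Fin (r + 1) → Set V | g 0 = ∅ ∧ g (Fin.last r) = A ∧
        ∀ k : Fin r, g k.castSucc ⊆ g k.succ ∧
          (g k.succ \ g k.castSucc).ncard = 1} := by
    refine ⟨?_, ?_, ?_⟩
    · rintro c ⟨hc0, hclast, _, hcstep⟩
      refine ⟨?_, ?_, fun k => hcstep k⟩
      · show c 0 \ Set.range M.sV = ∅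
        rw [hc0, Set.diff_self]
      · show c (Fin.last r) \ Set.range M.sV = A
        rw [hclast]
    · rintro c ⟨_, _, hcmax, _⟩ c' ⟨_, _, hc'max, _⟩ hcc'
      funext k
      exact maxIndep_eq_of_diff_eq M (hcmax k) (hc'max k) (congrFun hcc' k)
    · rintro g ⟨hg0, hglast, hgstep⟩
      have hgmono : Monotone g := flag_mono fun k => (hgstep k).1
      have hgA : ∀ k, g k ⊆ A := by
        intro k
        rw [← hglast]
        exact hgmono (Fin.le_last k)
      set c : Fin (r + 1) → Set V := fun k => extSet M (g k) with hc
      have hcdiff : ∀ k, c k \ Set.range M.sV = g k := by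
        intro k
        exact extSet_diff M ((hgA k).trans hAVg)
      have hcmax : ∀ k, MaxIndep H (c k) :=
        fun k => extSet_maxIndep M ((hgA k).trans hAVg)
          (indepOn_mono hAind (hgA k))
      refine ⟨c, ⟨?_, ?_, hcmax, ?_⟩, ?_⟩
      · show c 0 = Set.range M.sV
        rw [hc]; simp only; rw [hg0, extSet_empty]
      · show c (Fin.last r) = F
        refine maxIndep_eq_of_diff_eq M (hcmax (Fin.last r)) hF ?_
        rw [hcdiff, hglast]
      · intro k
        rw [hcdiff, hcdiff]
        exact hgstep k
      · funext k
        exact hcdiff k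
  rw [← Set.ncard_image_of_injOn hbij.injOn, hbij.image_eq]
  exact flag_ncard A r hr

end Paper
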